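/- Let u ∈ ℂ satisfy u² + u + 1 = 0, and let A = [[1,1],[0,1]], B = [[1,0],[−u,1]] in SL(2,ℂ). Then over the field ℂ(t), det( I − t⁻¹·AB⁻¹A⁻¹ + AB⁻¹A⁻¹B − t·B + BAB⁻¹A⁻¹ ) = t⁻²(t−1)²(t² − 4t + 1). -/

import Mathlib

set_option synthInstance.maxHeartbeats 400000 in
set_option maxHeartbeats 1000000 in
/-- Let `u ∈ ℂ` with `u² + u + 1 = 0`, and `A = [[1,1],[0,1]]`, `B = [[1,0],[-u,1]]`
regarded in `SL(2, ℂ(t))`. Then over `ℂ(t)`,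
`det(I - t⁻¹ A B⁻¹ A⁻¹ + A B⁻¹ A⁻¹ B - t B + B A B⁻¹ A⁻¹) = t⁻² (t-1)² (t² - 4t + 1)`. -/
theorem stmt7 (u : ℂ) (hu : u ^ 2 + u + 1 = 0)
    (A B : Matrix (Fin 2) (Fin 2) (RatFunc ℂ))
    (hA : A = !![1, 1; 0, 1])
    (hB : B = !![1, 0; -(algebraMap ℂ (RatFunc ℂ) u), 1])
    (t : RatFunc ℂ) (ht : t = RatFunc.X) :
    (1 - t⁻¹ • (A * B⁻¹ * A⁻¹) + A * B⁻¹ * A⁻¹ * B - t • B + B * A * B⁻¹ * A⁻¹).det =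
      (t ^ 2)⁻¹ * (t - 1) ^ 2 * (t ^ 2 - 4 * t + 1) := by
  set v : RatFunc ℂ := algebraMap ℂ (RatFunc ℂ) u with hv
  have hv2 : v ^ 2 + v + 1 = 0 := by
    have := congrArg (algebraMap ℂ (RatFunc ℂ)) hu
    rw [hv]
    simpa [map_add, map_pow] using this
  have hAi : A⁻¹ = !![1, -1; 0, 1] := by
    apply Matrix.inv_eq_right_inv
    rw [hA, Matrix.one_fin_two]
    norm_num [Matrix.mul_fin_two]
  have hBi : B⁻¹ = !![1, 0; v, 1] := by
    apply Matrix.inv_eq_right_inv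
    rw [hB, Matrix.one_fin_two]
    norm_num [Matrix.mul_fin_two]
  have ht0 : t ≠ 0 := by rw [ht]; exact RatFunc.X_ne_zero
  rw [hAi, hBi, hA, hB, Matrix.one_fin_two]
  simp only [Matrix.mul_fin_two, Matrix.smul_of, Matrix.smul_cons, Matrix.smul_empty,
    smul_eq_mul, Matrix.sub_apply, Matrix.add_apply]
  rw [Matrix.det_fin_two]
  simp only [Matrix.sub_apply, Matrix.add_apply, Matrix.of_apply, Matrix.cons_val', Matrix.cons_val_zero, Matrix.cons_val_one, Matrix.head_cons, Matrix.empty_val', Matrix.cons_val_fin_one, Matrix.head_fin_const]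
  field_simp
  linear_combination (t^4*v^2 - (t*(t-1)^2 + t^4)*v + (t^4 - t*(t-1)^2) + t*(t-1)^2*(v+1) + (t^2 - t^4) * (v^2 - v + 1)) * hv2
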